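/- Let n, l, p be positive integers, let λ > 0 and 0 < μ ≤ α be real numbers, let M : [0,∞) → (n×n real symmetric matrices) be differentiable, let 𝒜 : [0,∞) → ℝ^{n×n}, ℬ : [0,∞) → ℝ^{n×l}, 𝒞 : [0,∞) → ℝ^{p×n}, 𝒟 : [0,∞) → ℝ^{p×l} be matrix-valued functions, let w : [0,∞) → ℝ^l, and let x : [0,∞) → ℝ^n be differentiable with x'(t) = 𝒜(t)x(t) + ℬ(t)w(t) for all t ≥ 0; set z(t) = 𝒞(t)x(t) + 𝒟(t)w(t). Assume for every t ≥ 0: (i) the block matrix [[M(t)𝒜(t) + 𝒜(t)ᵀM(t) + M'(t) + λM(t), M(t)ℬ(t)], [ℬ(t)ᵀM(t), −μI_l]] is negative semidefinite, and (ii) the block matrix [[λM(t), 0], [0, (α−μ)I_l]] − α⁻¹·[𝒞(t) 𝒟(t)]ᵀ[𝒞(t) 𝒟(t)] is positive semidefinite. Then for every T ≥ 0 and every W ≥ 0 such that ‖w(s)‖ ≤ W for all s ∈ [0,T], one has ‖z(T)‖² ≤ α²W² + α·λ·e^{−λT}·x(0)ᵀM(0)x(0). -/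

import Mathlib

open Matrix Set

noncomputable def euclNorm {ι : Type*} [Fintype ι] (v : ι → ℝ) : ℝ := Real.sqrt (v ⬝ᵥ v)

lemma mulVec_dot' {m n : Type*} [Fintype m] [Fintype n] (A : Matrix m n ℝ) (u : n → ℝ) (v : m → ℝ) :
    (A *ᵥ u) ⬝ᵥ v = u ⬝ᵥ (Aᵀ *ᵥ v) := by
  rw [dotProduct_comm, dotProduct_mulVec, ← mulVec_transpose, dotProduct_comm]

lemma dot_self_nonneg' {m : Type*} [Fintype m] (v : m → ℝ) : 0 ≤ v ⬝ᵥ v :=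
  Finset.sum_nonneg fun _ _ => mul_self_nonneg _

/-- Lemma 1 of the paper, in linear time-varying (differential dynamics) form:
the two robust-CCM matrix inequalities certify a universal L∞ gain bound `α`
from the disturbance `w` to the output `z = 𝒞x + 𝒟w`, with offset
`β(x(0)) = α·λ·e^{-λT}·x(0)ᵀ M(0) x(0)`. -/
theorem universal_Linf_gain_bound
    (n l p : ℕ) (hn : 0 < n) (hl : 0 < l) (hp : 0 < p)
    (lam mu alpha : ℝ) (hlam : 0 < lam) (hmu : 0 < mu) (hmualpha : mu ≤ alpha)
    (M M' : ℝ → Matrix (Fin n) (Fin n) ℝ)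
    (hMsymm : ∀ t, 0 ≤ t → (M t).IsSymm)
    (hMderiv : ∀ t, 0 ≤ t → ∀ i j,
      HasDerivWithinAt (fun s => M s i j) (M' t i j) (Set.Ici (0 : ℝ)) t)
    (𝒜 : ℝ → Matrix (Fin n) (Fin n) ℝ) (ℬ : ℝ → Matrix (Fin n) (Fin l) ℝ)
    (𝒞 : ℝ → Matrix (Fin p) (Fin n) ℝ) (𝒟 : ℝ → Matrix (Fin p) (Fin l) ℝ)
    (w : ℝ → Fin l → ℝ) (x : ℝ → Fin n → ℝ)
    (hx : ∀ t, 0 ≤ t →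
      HasDerivWithinAt x (𝒜 t *ᵥ x t + ℬ t *ᵥ w t) (Set.Ici (0 : ℝ)) t)
    (z : ℝ → Fin p → ℝ) (hz : ∀ t, 0 ≤ t → z t = 𝒞 t *ᵥ x t + 𝒟 t *ᵥ w t)
    -- (i) the first block matrix is negative semidefinite
    (hineq1 : ∀ t, 0 ≤ t →
      (-(Matrix.fromBlocks
          (M t * 𝒜 t + (𝒜 t)ᵀ * M t + M' t + lam • M t) (M t * ℬ t)
          ((ℬ t)ᵀ * M t) (-(mu • (1 : Matrix (Fin l) (Fin l) ℝ))))).PosSemidef)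
    -- (ii) the second block matrix is positive semidefinite
    (hineq2 : ∀ t, 0 ≤ t →
      (Matrix.fromBlocks (lam • M t) 0 0 ((alpha - mu) • (1 : Matrix (Fin l) (Fin l) ℝ))
        - alpha⁻¹ • ((Matrix.fromCols (𝒞 t) (𝒟 t))ᵀ *
            Matrix.fromCols (𝒞 t) (𝒟 t))).PosSemidef) :
    ∀ T, 0 ≤ T → ∀ W, 0 ≤ W → (∀ s, 0 ≤ s → s ≤ T → euclNorm (w s) ≤ W) →
      euclNorm (z T) ^ 2 ≤
        alpha ^ 2 * W ^ 2 + alpha * lam * Real.exp (-lam * T) * (x 0 ⬝ᵥ (M 0 *ᵥ x 0)) := by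
  intro T hT W hW hwB
  have halpha : 0 < alpha := lt_of_lt_of_le hmu hmualpha
  set x' : ℝ → Fin n → ℝ := fun t => 𝒜 t *ᵥ x t + ℬ t *ᵥ w t with hx'def
  set V : ℝ → ℝ := fun t => x t ⬝ᵥ (M t *ᵥ x t) with hVdef
  set V' : ℝ → ℝ := fun t =>
    x' t ⬝ᵥ (M t *ᵥ x t) + x t ⬝ᵥ (M' t *ᵥ x t) + x t ⬝ᵥ (M t *ᵥ x' t) with hV'def
  -- derivative of V
  have hVder : ∀ t, 0 ≤ t → HasDerivWithinAt V (V' t) (Ici (0:ℝ)) t := by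
    intro t ht
    have hxi : ∀ i, HasDerivWithinAt (fun s => x s i) (x' t i) (Ici (0:ℝ)) t :=
      fun i => hasDerivWithinAt_pi.1 (hx t ht) i
    have h1 : HasDerivWithinAt (fun s => ∑ i, ∑ j, x s i * (M s i j * x s j))
        (∑ i, ∑ j, (x' t i * (M t i j * x t j) + x t i * (M' t i j * x t j + M t i j * x' t j)))
        (Ici (0:ℝ)) t := by
      apply HasDerivWithinAt.fun_sum
      intro i _
      apply HasDerivWithinAt.fun_sum
      intro j _
      exact (hxi i).mul ((hMderiv t ht i j).mul (hxi j))
    convert h1 using 1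
    · funext s; simp [hVdef, dotProduct, mulVec, Finset.mul_sum, mul_assoc]
    · simp [hV'def, dotProduct, mulVec, Finset.mul_sum, Finset.sum_add_distrib, mul_add, mul_assoc]
      ring
  -- differential inequality from (i)
  have hkey : ∀ t, 0 ≤ t → V' t + lam * V t ≤ mu * (w t ⬝ᵥ w t) := by
    intro t ht
    have h0 := (hineq1 t ht).dotProduct_mulVec_nonneg (Sum.elim (x t) (w t))
    rw [star_trivial, neg_mulVec, dotProduct_neg] at h0
    have h0' : Sum.elim (x t) (w t) ⬝ᵥ
        ((Matrix.fromBlocks (M t * 𝒜 t + (𝒜 t)ᵀ * M t + M' t + lam • M t) (M t * ℬ t)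
          ((ℬ t)ᵀ * M t) (-(mu • (1 : Matrix (Fin l) (Fin l) ℝ)))) *ᵥ Sum.elim (x t) (w t)) ≤ 0 :=
      by linarith
    have hid : Sum.elim (x t) (w t) ⬝ᵥ
        ((Matrix.fromBlocks (M t * 𝒜 t + (𝒜 t)ᵀ * M t + M' t + lam • M t) (M t * ℬ t)
          ((ℬ t)ᵀ * M t) (-(mu • (1 : Matrix (Fin l) (Fin l) ℝ)))) *ᵥ Sum.elim (x t) (w t))
        = V' t + lam * V t - mu * (w t ⬝ᵥ w t) := by
      simp only [hVdef, hV'def, hx'def, fromBlocks_mulVec, sumElim_dotProduct_sumElim,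
        add_mulVec, mulVec_add, dotProduct_add, add_dotProduct, ← mulVec_mulVec, neg_mulVec,
        smul_mulVec, one_mulVec, dotProduct_neg, dotProduct_smul, smul_eq_mul,
        mulVec_dot', smul_dotProduct, Sum.elim_comp_inl, Sum.elim_comp_inr]
      ring
    linarith [hid ▸ h0']
  -- w bound in squared form
  have hw2 : ∀ s, 0 ≤ s → s ≤ T → w s ⬝ᵥ w s ≤ W ^ 2 := by
    intro s hs hsT
    have h1 : euclNorm (w s) ^ 2 = w s ⬝ᵥ w s := Real.sq_sqrt (dot_self_nonneg' _)
    have h2 := hwB s hs hsT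
    have h0 : (0:ℝ) ≤ euclNorm (w s) := Real.sqrt_nonneg _
    calc w s ⬝ᵥ w s = euclNorm (w s) ^ 2 := h1.symm
      _ ≤ W ^ 2 := pow_le_pow_left₀ h0 h2 2
  -- Gronwall: monotone auxiliary function
  set c : ℝ := mu * W ^ 2 with hc
  have hc0 : 0 ≤ c := by positivity
  set G : ℝ → ℝ := fun s => (c / lam) * Real.exp (lam * s) - Real.exp (lam * s) * V s with hG
  have hGder : ∀ t, 0 ≤ t → HasDerivWithinAt G
      (Real.exp (lam * t) * (c - (V' t + lam * V t))) (Ici (0:ℝ)) t := by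
    intro t ht
    have hE : HasDerivAt (fun s => Real.exp (lam * s)) (Real.exp (lam * t) * lam) t := by
      simpa [mul_one] using (HasDerivAt.exp ((hasDerivAt_id t).const_mul lam))
    have h : HasDerivWithinAt G (c / lam * (Real.exp (lam * t) * lam) - (Real.exp (lam * t) * lam * V t
        + Real.exp (lam * t) * V' t)) (Ici 0) t := ((hE.hasDerivWithinAt.const_mul ((c/lam))).sub
      (hE.hasDerivWithinAt.mul (hVder t ht)))
    convert h using 1
    linear_combination (-(c * Real.exp (lam * t))) * mul_inv_cancel₀ hlam.ne'
  have hmono : MonotoneOn G (Icc 0 T) := by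
    apply monotoneOn_of_hasDerivWithinAt_nonneg (convex_Icc 0 T)
      (f' := fun t => Real.exp (lam * t) * (c - (V' t + lam * V t)))
    · intro s hs
      exact ((hGder s hs.1).continuousWithinAt).mono Icc_subset_Ici_self
    · intro s hs
      rw [interior_Icc] at hs
      refine (hGder s hs.1.le).mono ?_
      rw [interior_Icc]
      exact fun y hy => le_of_lt hy.1
    · intro s hs
      rw [interior_Icc] at hs
      have h1 : V' s + lam * V s ≤ c := by
        have := hkey s hs.1.le
        have := hw2 s hs.1.le hs.2.le
        nlinarith
      exact mul_nonneg (Real.exp_pos _).le (by linarith)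
  -- conclude Gronwall bound on V T
  have hGT : G 0 ≤ G T := hmono (left_mem_Icc.2 hT) (right_mem_Icc.2 hT) hT
  have hVT : V T ≤ c / lam + Real.exp (-lam * T) * V 0 := by
    have hEpos : 0 < Real.exp (lam * T) := Real.exp_pos _
    have hEinv : Real.exp (-lam * T) = (Real.exp (lam * T))⁻¹ := by
      rw [neg_mul, Real.exp_neg]
    have hG0 : G 0 = c / lam - V 0 := by simp [hG]
    have hGTv : G T = (c / lam) * Real.exp (lam * T) - Real.exp (lam * T) * V T := rfl
    rw [hG0, hGTv] at hGT
    have h2 : Real.exp (lam * T) * V T ≤ c / lam * Real.exp (lam * T) + V 0 := by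
      have := div_nonneg hc0 hlam.le
      linarith
    have h3 := mul_le_mul_of_nonneg_left h2 (inv_pos.2 hEpos).le
    rw [inv_mul_cancel_left₀ hEpos.ne'] at h3
    have h5 : (Real.exp (lam * T))⁻¹ * (c / lam * Real.exp (lam * T) + V 0)
        = c / lam + (Real.exp (lam * T))⁻¹ * V 0 := by
      rw [mul_add, mul_comm ((Real.exp (lam * T))⁻¹) (c / lam * Real.exp (lam * T)),
        mul_assoc, mul_inv_cancel₀ hEpos.ne', mul_one]
    rw [h5] at h3
    rw [hEinv]
    exact h3
  -- output bound from (ii)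
  have h0 := (hineq2 T hT).dotProduct_mulVec_nonneg (Sum.elim (x T) (w T))
  rw [star_trivial] at h0
  have hid2 : Sum.elim (x T) (w T) ⬝ᵥ
      ((Matrix.fromBlocks (lam • M T) 0 0 ((alpha - mu) • (1 : Matrix (Fin l) (Fin l) ℝ))
        - alpha⁻¹ • ((Matrix.fromCols (𝒞 T) (𝒟 T))ᵀ *
            Matrix.fromCols (𝒞 T) (𝒟 T))) *ᵥ Sum.elim (x T) (w T))
      = lam * V T + (alpha - mu) * (w T ⬝ᵥ w T)
        - alpha⁻¹ * ((𝒞 T *ᵥ x T + 𝒟 T *ᵥ w T) ⬝ᵥ (𝒞 T *ᵥ x T + 𝒟 T *ᵥ w T)) := by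
    simp only [hVdef, sub_mulVec, dotProduct_sub, fromBlocks_mulVec, sumElim_dotProduct_sumElim,
      smul_mulVec, one_mulVec, zero_mulVec, add_zero, zero_add, dotProduct_smul,
      smul_eq_mul, ← mulVec_mulVec, ← mulVec_dot', fromCols_mulVec_sumElim,
      Sum.elim_comp_inl, Sum.elim_comp_inr]
  rw [hid2] at h0
  -- final assembly
  have hzT : z T = 𝒞 T *ᵥ x T + 𝒟 T *ᵥ w T := hz T hT
  have hzz : euclNorm (z T) ^ 2 = z T ⬝ᵥ z T := Real.sq_sqrt (dot_self_nonneg' _)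
  rw [hzz, hzT]
  have hwT2 := hw2 T hT le_rfl
  set zz : ℝ := (𝒞 T *ᵥ x T + 𝒟 T *ᵥ w T) ⬝ᵥ (𝒞 T *ᵥ x T + 𝒟 T *ᵥ w T) with hzzdef
  have hz2 : zz ≤ alpha * (lam * V T) + alpha * ((alpha - mu) * (w T ⬝ᵥ w T)) := by
    have h5 : alpha⁻¹ * zz ≤ lam * V T + (alpha - mu) * (w T ⬝ᵥ w T) := by linarith
    have h6 := mul_le_mul_of_nonneg_left h5 halpha.le
    have h7 : alpha * (alpha⁻¹ * zz) = zz := by field_simp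
    linarith [h6, h7]
  have h3 : alpha * (lam * V T) ≤ alpha * c + alpha * lam * (Real.exp (-lam * T) * V 0) := by
    have h8 := mul_le_mul_of_nonneg_left hVT (by positivity : (0:ℝ) ≤ alpha * lam)
    have h9 : alpha * lam * (c / lam) = alpha * c := by
      field_simp
    have h10 : alpha * lam * (c / lam + Real.exp (-lam * T) * V 0)
        = alpha * lam * (c / lam) + alpha * lam * (Real.exp (-lam * T) * V 0) := by ring
    rw [h10, h9] at h8
    linarith [h8]
  have h4 : alpha * ((alpha - mu) * (w T ⬝ᵥ w T)) ≤ alpha * ((alpha - mu) * W ^ 2) :=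
    mul_le_mul_of_nonneg_left
      (mul_le_mul_of_nonneg_left hwT2 (by linarith)) halpha.le
  have hg0 : x 0 ⬝ᵥ (M 0 *ᵥ x 0) = V 0 := rfl
  rw [hg0]
  have h5 : alpha * c + alpha * ((alpha - mu) * W ^ 2) = alpha ^ 2 * W ^ 2 := by
    rw [hc]; ring
  have h6 : alpha * lam * (Real.exp (-lam * T) * V 0)
      = alpha * lam * Real.exp (-lam * T) * V 0 := by ring
  linarith [hz2, h3, h4, h5, h6]
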